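/- Let X be the generic 2n×2n skew-symmetric matrix of indeterminates (x_{ij} = −x_{ji}, x_{ii} = 0). For any indices i₁ < i₂ < i₃ < i₄, each of the three binomial operators y_{i₁i₂}y_{i₃i₄} + y_{i₁i₃}y_{i₂i₄}, y_{i₁i₂}y_{i₃i₄} − y_{i₁i₄}y_{i₂i₃}, and y_{i₁i₃}y_{i₂i₄} + y_{i₁i₄}y_{i₂i₃} annihilates the Pfaffian Pf(X) under the differentiation action. -/

import Mathlib

open MvPolynomial

/-- Position `2i` in `Fin (2n)`. -/
def pos0 {n : ℕ} (i : Fin n) : Fin (2 * n) := ⟨2 * i.val, by have := i.isLt; omega⟩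

/-- Position `2i + 1` in `Fin (2n)`. -/
def pos1 {n : ℕ} (i : Fin n) : Fin (2 * n) := ⟨2 * i.val + 1, by have := i.isLt; omega⟩

/-- The set `F_{2n}` of permutations `σ` of `{1,…,2n}` with
`σ(1) < σ(3) < ⋯ < σ(2n-1)` and `σ(2i-1) < σ(2i)` for all `i`. -/
noncomputable def pfPerms (n : ℕ) : Finset (Equiv.Perm (Fin (2 * n))) :=
  @Finset.filter _
    (fun σ => (∀ i : Fin n, σ (pos0 i) < σ (pos1 i)) ∧
      ∀ i j : Fin n, i < j → σ (pos0 i) < σ (pos0 j))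
    (Classical.decPred _) Finset.univ

/-- The Pfaffian-type sum associated to an entry function `E` on a
`2n × 2n` index set. -/
noncomputable def pfaffOf {n : ℕ} {P : Type} [CommRing P]
    (E : Fin (2 * n) → Fin (2 * n) → P) : P :=
  ∑ σ ∈ pfPerms n, (Equiv.Perm.sign σ : ℤ) •
    ∏ i : Fin n, E (σ (pos0 i)) (σ (pos1 i))

/-- Index set for the independent entries of a generic skew-symmetric matrix. -/
abbrev SkVar (n : ℕ) := {p : Fin (2 * n) × Fin (2 * n) // p.1 < p.2}

/-- The `(a,b)` entry of the generic `2n × 2n` skew-symmetric matrix. -/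
noncomputable def skewEntry (n : ℕ) (K : Type) [Field K] (a b : Fin (2 * n)) :
    MvPolynomial (SkVar n) K :=
  if h : a < b then X ⟨(a, b), h⟩
  else if h' : b < a then - X ⟨(b, a), h'⟩ else 0

/-- The Pfaffian of the generic `2n × 2n` skew-symmetric matrix. -/
noncomputable def genPf (n : ℕ) (K : Type) [Field K] : MvPolynomial (SkVar n) K :=
  pfaffOf (skewEntry n K)

namespace PfAux

open Equiv Equiv.Perm Finsupp

variable {n : ℕ}

lemma pos0_lt_pos1 (i : Fin n) : (pos0 i) < pos1 i := by
  simp [pos0, pos1, Fin.lt_def]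

lemma pos0_ne_pos1 (i j : Fin n) : (pos0 i) ≠ pos1 j := by
  simp only [pos0, pos1, Fin.ne_iff_vne]; omega

lemma pos0_inj {i j : Fin n} (h : (pos0 i) = pos0 j) : i = j := by
  simp only [pos0, Fin.mk.injEq, Fin.ext_iff] at h ⊢; omega

lemma pos1_inj {i j : Fin n} (h : (pos1 i) = pos1 j) : i = j := by
  simp only [pos1, Fin.mk.injEq, Fin.ext_iff] at h ⊢; omega

def e2 (n : ℕ) : Fin n × Fin 2 ≃ Fin (2 * n) :=
  finProdFinEquiv.trans (finCongr (Nat.mul_comm n 2))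

lemma e2_apply_val (p : Fin n × Fin 2) : ((e2 n) p).val = 2 * p.1.val + p.2.val := by
  simp [e2, finProdFinEquiv]; omega

lemma e2_symm_pos0 (i : Fin n) : (e2 n).symm (pos0 i) = (i, 0) := by
  apply (e2 n).injective
  simp only [Equiv.apply_symm_apply]
  apply Fin.ext
  rw [e2_apply_val]; simp [pos0]

lemma e2_symm_pos1 (i : Fin n) : (e2 n).symm (pos1 i) = (i, 1) := by
  apply (e2 n).injective
  simp only [Equiv.apply_symm_apply]
  apply Fin.ext
  rw [e2_apply_val]; simp [pos1]

def blockPerm (τ : Perm (Fin n)) : Perm (Fin (2 * n)) :=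
  (e2 n).permCongr (Equiv.prodCongrLeft (fun _ : Fin 2 => τ))

@[simp] lemma blockPerm_pos0 (τ : Perm (Fin n)) (i : Fin n) :
    blockPerm τ (pos0 i) = pos0 (τ i) := by
  simp only [blockPerm, Equiv.permCongr_apply, e2_symm_pos0, Equiv.prodCongrLeft_apply]
  apply Fin.ext; rw [e2_apply_val]; simp [pos0]

@[simp] lemma blockPerm_pos1 (τ : Perm (Fin n)) (i : Fin n) :
    blockPerm τ (pos1 i) = pos1 (τ i) := by
  simp only [blockPerm, Equiv.permCongr_apply, e2_symm_pos1, Equiv.prodCongrLeft_apply]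
  apply Fin.ext; rw [e2_apply_val]; simp [pos1]

lemma sign_blockPerm (τ : Perm (Fin n)) : Equiv.Perm.sign (blockPerm τ) = 1 := by
  rw [blockPerm, Equiv.Perm.sign_permCongr, Equiv.Perm.sign_prodCongrLeft]
  simp [Finset.prod_const, Int.units_sq]

lemma blockPerm_mul (τ τ' : Perm (Fin n)) :
    blockPerm τ * blockPerm τ' = blockPerm (τ * τ') := by
  unfold blockPerm
  ext x
  rcases (e2 n).surjective x with ⟨⟨i, j⟩, rfl⟩
  fin_cases j <;>
    simp [Equiv.permCongr_apply, Equiv.symm_apply_apply, Perm.mul_apply]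

lemma blockPerm_one : blockPerm (1 : Perm (Fin n)) = 1 := by
  unfold blockPerm
  ext x
  rcases (e2 n).surjective x with ⟨⟨i, j⟩, rfl⟩
  simp [Equiv.permCongr_apply]

/-! ### Membership in `pfPerms` -/

lemma mem_pfPerms {σ : Perm (Fin (2 * n))} :
    σ ∈ pfPerms n ↔ (∀ i : Fin n, σ (pos0 i) < σ (pos1 i)) ∧
      ∀ i j : Fin n, i < j → σ (pos0 i) < σ (pos0 j) := by
  classical
  simp only [pfPerms, Finset.filter_congr_decidable, Finset.mem_filter, Finset.mem_univ, true_and]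

/-! ### The variable attached to a block -/

/-- The variable occupied by block `i` of `σ`. -/
def pv (σ : Perm (Fin (2 * n))) (i : Fin n) : SkVar n :=
  if h : σ (pos0 i) < σ (pos1 i) then ⟨(σ (pos0 i), σ (pos1 i)), h⟩
  else ⟨(σ (pos1 i), σ (pos0 i)), by
    rcases lt_trichotomy (σ (pos0 i)) (σ (pos1 i)) with h' | h' | h'
    · exact absurd h' h
    · exact absurd (σ.injective h') (pos0_ne_pos1 i i)
    · exact h'⟩

lemma pv_eq {σ : Perm (Fin (2 * n))} (hb : ∀ i, σ (pos0 i) < σ (pos1 i)) (i : Fin n) :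
    pv σ i = ⟨(σ (pos0 i), σ (pos1 i)), hb i⟩ := dif_pos (hb i)

lemma pv_inj {σ : Perm (Fin (2 * n))} (hb : ∀ i, σ (pos0 i) < σ (pos1 i)) :
    Function.Injective (pv σ) := by
  intro i j h
  rw [pv_eq hb i, pv_eq hb j] at h
  have : σ (pos0 i) = σ (pos0 j) := congrArg (fun t => t.1.1) h
  exact pos0_inj (σ.injective this)

/-- The exponent of the monomial attached to `σ`. -/
noncomputable def D (σ : Perm (Fin (2 * n))) : SkVar n →₀ ℕ :=
  ∑ i : Fin n, Finsupp.single (pv σ i) 1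

lemma D_apply_eq_one {σ : Perm (Fin (2 * n))} (hb : ∀ i, σ (pos0 i) < σ (pos1 i))
    {i : Fin n} {v : SkVar n} (h : pv σ i = v) : D σ v = 1 := by
  rw [D, Finsupp.finset_sum_apply]
  rw [Finset.sum_eq_single i]
  · simp [h]
  · intro j _ hj
    rw [Finsupp.single_apply, if_neg]
    intro e
    exact hj (pv_inj hb (e.trans h.symm) ▸ rfl)
  · simp

lemma D_apply_eq_zero {σ : Perm (Fin (2 * n))} {v : SkVar n} (h : ∀ i, pv σ i ≠ v) :
    D σ v = 0 := by
  rw [D, Finsupp.finset_sum_apply]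
  refine Finset.sum_eq_zero fun i _ => ?_
  rw [Finsupp.single_apply, if_neg (h i)]

lemma exists_of_D_ne_zero {σ : Perm (Fin (2 * n))} {v : SkVar n} (h : D σ v ≠ 0) :
    ∃ i, pv σ i = v := by
  by_contra hc
  push_neg at hc
  exact h (D_apply_eq_zero hc)

lemma D_le_one {σ : Perm (Fin (2 * n))} (hb : ∀ i, σ (pos0 i) < σ (pos1 i)) (v : SkVar n) :
    D σ v ≤ 1 := by
  by_cases h : ∃ i, pv σ i = v
  · obtain ⟨i, hi⟩ := h
    rw [D_apply_eq_one hb hi]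
  · push_neg at h
    rw [D_apply_eq_zero h]
    omega


/-! ### `genPf` as a sum of monomials -/

lemma term_eq_monomial {K : Type} [Field K] {σ : Perm (Fin (2 * n))}
    (hb : ∀ i, σ (pos0 i) < σ (pos1 i)) :
    (∏ i : Fin n, skewEntry n K (σ (pos0 i)) (σ (pos1 i))) = monomial (D σ) (1 : K) := by
  rw [D, monomial_sum_one]
  refine Finset.prod_congr rfl fun i _ => ?_
  rw [skewEntry, dif_pos (hb i), pv_eq hb i]
  rfl

lemma genPf_eq (K : Type) [Field K] :
    genPf n K = ∑ σ ∈ pfPerms n, (Equiv.Perm.sign σ : ℤ) • monomial (D σ) (1 : K) := by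
  unfold genPf pfaffOf
  refine Finset.sum_congr rfl fun σ hσ => ?_
  rw [term_eq_monomial (mem_pfPerms.1 hσ).1]

lemma pderiv_pderiv_genPf (K : Type) [Field K] (v w : SkVar n) (hvw : v ≠ w) :
    pderiv v (pderiv w (genPf n K)) =
      ∑ σ ∈ pfPerms n, (Equiv.Perm.sign σ : ℤ) •
        monomial (D σ - Finsupp.single w 1 - Finsupp.single v 1)
          ((D σ w * D σ v : ℕ) : K) := by
  rw [genPf_eq, map_sum, map_sum]
  refine Finset.sum_congr rfl fun σ _ => ?_
  rw [map_zsmul, map_zsmul, pderiv_monomial, pderiv_monomial]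
  congr 1
  have hv : (D σ - Finsupp.single w 1 : SkVar n →₀ ℕ) v = D σ v := by
    rw [Finsupp.tsub_apply, Finsupp.single_apply, if_neg (by exact fun h => hvw (h ▸ rfl))]
    simp
  rw [hv]
  push_cast
  ring_nf

/-! ### Sorting the blocks -/

lemma sort_unique {f : Fin n → Fin (2 * n)} (hf : Function.Injective f)
    {α β : Perm (Fin n)} (hα : StrictMono (f ∘ α)) (hβ : StrictMono (f ∘ β)) :
    α = β := by
  have hr : Set.range (f ∘ α) = Set.range (f ∘ β) := by
    rw [Set.range_comp, Set.range_comp, α.surjective.range_eq, β.surjective.range_eq]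
  haveI : WellFoundedLT (Fin n) := inferInstance
  have := (StrictMono.range_inj hα hβ).1 hr
  exact Equiv.ext fun k => hf (congrFun this k)

/-- Normalize a permutation with sorted blocks by sorting its block leaders. -/
noncomputable def normP (σ : Perm (Fin (2 * n))) : Perm (Fin (2 * n)) :=
  σ * blockPerm (Tuple.sort fun k => σ (pos0 k))

lemma leaders_inj (σ : Perm (Fin (2 * n))) :
    Function.Injective fun k : Fin n => σ (pos0 k) :=
  fun _ _ h => pos0_inj (σ.injective h)

lemma normP_pos0 (σ : Perm (Fin (2 * n))) (i : Fin n) :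
    normP σ (pos0 i) = σ (pos0 ((Tuple.sort fun k => σ (pos0 k)) i)) := by
  rw [normP, Perm.mul_apply, blockPerm_pos0]

lemma normP_pos1 (σ : Perm (Fin (2 * n))) (i : Fin n) :
    normP σ (pos1 i) = σ (pos1 ((Tuple.sort fun k => σ (pos0 k)) i)) := by
  rw [normP, Perm.mul_apply, blockPerm_pos1]

lemma normP_leaders_strictMono (σ : Perm (Fin (2 * n))) :
    StrictMono fun i : Fin n => normP σ (pos0 i) := by
  have h1 : Monotone ((fun k => σ (pos0 k)) ∘ (Tuple.sort fun k => σ (pos0 k))) :=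
    Tuple.monotone_sort _
  have h2 : Function.Injective ((fun k => σ (pos0 k)) ∘ (Tuple.sort fun k => σ (pos0 k))) :=
    (leaders_inj σ).comp (Tuple.sort _).injective
  have := h1.strictMono_of_injective h2
  intro i j hij
  show normP σ (pos0 i) < normP σ (pos0 j)
  rw [normP_pos0, normP_pos0]
  exact this hij

lemma normP_blocks {σ : Perm (Fin (2 * n))} (hb : ∀ i, σ (pos0 i) < σ (pos1 i)) (i : Fin n) :
    normP σ (pos0 i) < normP σ (pos1 i) := by
  rw [normP_pos0, normP_pos1]; exact hb _

lemma normP_mem {σ : Perm (Fin (2 * n))} (hb : ∀ i, σ (pos0 i) < σ (pos1 i)) :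
    normP σ ∈ pfPerms n :=
  mem_pfPerms.2 ⟨normP_blocks hb, fun _ _ hij => normP_leaders_strictMono σ hij⟩

lemma sign_normP (σ : Perm (Fin (2 * n))) :
    Equiv.Perm.sign (normP σ) = Equiv.Perm.sign σ := by
  rw [normP, map_mul, sign_blockPerm, mul_one]

lemma pv_normP {σ : Perm (Fin (2 * n))} (hb : ∀ i, σ (pos0 i) < σ (pos1 i)) (i : Fin n) :
    pv (normP σ) i = pv σ ((Tuple.sort fun k => σ (pos0 k)) i) := by
  rw [pv_eq (normP_blocks hb), pv_eq hb, Subtype.mk.injEq, Prod.mk.injEq]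
  exact ⟨normP_pos0 σ i, normP_pos1 σ i⟩

lemma D_normP {σ : Perm (Fin (2 * n))} (hb : ∀ i, σ (pos0 i) < σ (pos1 i)) :
    D (normP σ) = D σ := by
  unfold D
  rw [← Equiv.sum_comp (Tuple.sort fun k => σ (pos0 k)) (fun k => Finsupp.single (pv σ k) 1)]
  exact Finset.sum_congr rfl fun i _ => by rw [pv_normP hb]

/-- Normalizing `σ ∘ (block permutation)` recovers `σ` when `σ` is already normalized. -/
lemma normP_norm {σ : Perm (Fin (2 * n))} (hσ : σ ∈ pfPerms n) (ρ : Perm (Fin n)) :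
    normP (σ * blockPerm ρ) = σ := by
  obtain ⟨hb, hl⟩ := mem_pfPerms.1 hσ
  set g : Fin n → Fin (2 * n) := fun k => (σ * blockPerm ρ) (pos0 k) with hg
  have hgρ : ∀ k, g k = σ (pos0 (ρ k)) := fun k => by
    show (σ * blockPerm ρ) (pos0 k) = _
    rw [Perm.mul_apply, blockPerm_pos0]
  have hginj : Function.Injective g := by
    intro i j h
    rw [hgρ, hgρ] at h
    exact ρ.injective (pos0_inj (σ.injective h))
  have hlm : StrictMono fun k : Fin n => σ (pos0 k) := by
    intro i j hij; exact hl i j hij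
  have h1 : StrictMono (g ∘ Tuple.sort g) := by
    exact (Tuple.monotone_sort g).strictMono_of_injective
      (hginj.comp (Tuple.sort g).injective)
  have h2 : StrictMono (g ∘ ⇑(ρ⁻¹)) := by
    intro i j hij
    simp only [Function.comp_apply, hgρ, Perm.coe_inv, Equiv.apply_symm_apply]
    exact hlm hij
  have hτ : Tuple.sort g = ρ⁻¹ := sort_unique hginj h1 h2
  rw [normP, ← hg, hτ, mul_assoc, blockPerm_mul, mul_inv_cancel, blockPerm_one, mul_one]


/-! ### The key transport step -/

lemma step (a b c d : Fin (2 * n)) (hab : a < b) (hcd : c < d)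
    (hac : a ≠ c) (had : a ≠ d) (hbc : b ≠ c) (hbd : b ≠ d)
    (π : Perm (Fin (2 * n))) (hπab : π a < π b) (hπcd : π c < π d)
    (hfix : ∀ x, x ≠ a → x ≠ b → x ≠ c → x ≠ d → π x = x)
    {σ : Perm (Fin (2 * n))} (hσ : σ ∈ pfPerms n)
    (hv : D σ ⟨(a, b), hab⟩ ≠ 0) (hw : D σ ⟨(c, d), hcd⟩ ≠ 0) :
    normP (π * σ) ∈ pfPerms n ∧
    D (normP (π * σ)) ⟨(π a, π b), hπab⟩ ≠ 0 ∧
    D (normP (π * σ)) ⟨(π c, π d), hπcd⟩ ≠ 0 ∧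
    D σ - Finsupp.single ⟨(c, d), hcd⟩ 1 - Finsupp.single ⟨(a, b), hab⟩ 1 =
      D (normP (π * σ)) - Finsupp.single ⟨(π c, π d), hπcd⟩ 1
        - Finsupp.single ⟨(π a, π b), hπab⟩ 1 ∧
    Equiv.Perm.sign (normP (π * σ)) = Equiv.Perm.sign π * Equiv.Perm.sign σ ∧
    normP (π⁻¹ * normP (π * σ)) = σ := by
  obtain ⟨hb, hl⟩ := mem_pfPerms.1 hσ
  obtain ⟨p, hp⟩ := exists_of_D_ne_zero hv
  obtain ⟨q, hq⟩ := exists_of_D_ne_zero hw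
  have hp' := (pv_eq hb p).symm.trans hp
  have hq' := (pv_eq hb q).symm.trans hq
  have hpa : σ (pos0 p) = a := congrArg (fun t => t.1.1) hp'
  have hpb : σ (pos1 p) = b := congrArg (fun t => t.1.2) hp'
  have hqc : σ (pos0 q) = c := congrArg (fun t => t.1.1) hq'
  have hqd : σ (pos1 q) = d := congrArg (fun t => t.1.2) hq'
  have hpq : p ≠ q := fun e => hac (by rw [← hpa, ← hqc, e])
  have havoid0 : ∀ k, k ≠ p → k ≠ q →
      σ (pos0 k) ≠ a ∧ σ (pos0 k) ≠ b ∧ σ (pos0 k) ≠ c ∧ σ (pos0 k) ≠ d := by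
    intro k hkp hkq
    refine ⟨?_, ?_, ?_, ?_⟩
    · intro e; exact hkp (pos0_inj (σ.injective (e.trans hpa.symm)))
    · intro e; exact pos0_ne_pos1 k p (σ.injective (e.trans hpb.symm))
    · intro e; exact hkq (pos0_inj (σ.injective (e.trans hqc.symm)))
    · intro e; exact pos0_ne_pos1 k q (σ.injective (e.trans hqd.symm))
  have havoid1 : ∀ k, k ≠ p → k ≠ q →
      σ (pos1 k) ≠ a ∧ σ (pos1 k) ≠ b ∧ σ (pos1 k) ≠ c ∧ σ (pos1 k) ≠ d := by
    intro k hkp hkq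
    refine ⟨?_, ?_, ?_, ?_⟩
    · intro e; exact pos0_ne_pos1 p k (σ.injective (e.trans hpa.symm)).symm
    · intro e; exact hkp (pos1_inj (σ.injective (e.trans hpb.symm)))
    · intro e; exact pos0_ne_pos1 q k (σ.injective (e.trans hqc.symm)).symm
    · intro e; exact hkq (pos1_inj (σ.injective (e.trans hqd.symm)))
  have hbπ : ∀ i, (π * σ) (pos0 i) < (π * σ) (pos1 i) := by
    intro k
    rw [Perm.mul_apply, Perm.mul_apply]
    by_cases hkp : k = p
    · subst hkp; rw [hpa, hpb]; exact hπab
    by_cases hkq : k = q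
    · subst hkq; rw [hqc, hqd]; exact hπcd
    obtain ⟨h1, h2, h3, h4⟩ := havoid0 k hkp hkq
    obtain ⟨g1, g2, g3, g4⟩ := havoid1 k hkp hkq
    rw [hfix _ h1 h2 h3 h4, hfix _ g1 g2 g3 g4]
    exact hb k
  have hmem := normP_mem hbπ
  have hpvπ : ∀ k, k ≠ p → k ≠ q → pv (π * σ) k = pv σ k := by
    intro k hkp hkq
    obtain ⟨h1, h2, h3, h4⟩ := havoid0 k hkp hkq
    obtain ⟨g1, g2, g3, g4⟩ := havoid1 k hkp hkq
    rw [pv_eq hbπ, pv_eq hb, Subtype.mk.injEq, Prod.mk.injEq, Perm.mul_apply, Perm.mul_apply]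
    exact ⟨hfix _ h1 h2 h3 h4, hfix _ g1 g2 g3 g4⟩
  have hpvp : pv (π * σ) p = ⟨(π a, π b), hπab⟩ := by
    rw [pv_eq hbπ, Subtype.mk.injEq, Prod.mk.injEq, Perm.mul_apply, Perm.mul_apply, hpa, hpb]
    exact ⟨rfl, rfl⟩
  have hpvq : pv (π * σ) q = ⟨(π c, π d), hπcd⟩ := by
    rw [pv_eq hbπ, Subtype.mk.injEq, Prod.mk.injEq, Perm.mul_apply, Perm.mul_apply, hqc, hqd]
    exact ⟨rfl, rfl⟩
  have hD : D (normP (π * σ)) = D (π * σ) := D_normP hbπ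
  have hqmem : q ∈ Finset.univ.erase p :=
    Finset.mem_erase.2 ⟨fun e => hpq e.symm, Finset.mem_univ q⟩
  have hsplit : ∀ T : Perm (Fin (2 * n)),
      D T = ((∑ k ∈ (Finset.univ.erase p).erase q, Finsupp.single (pv T k) 1) +
        Finsupp.single (pv T q) 1) + Finsupp.single (pv T p) 1 := by
    intro T
    rw [D, ← Finset.sum_erase_add Finset.univ _ (Finset.mem_univ p)]
    congr 1
    rw [← Finset.sum_erase_add _ _ hqmem]
  have hrest : (∑ k ∈ (Finset.univ.erase p).erase q, Finsupp.single (pv (π * σ) k) 1) =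
      ∑ k ∈ (Finset.univ.erase p).erase q, Finsupp.single (pv σ k) 1 := by
    refine Finset.sum_congr rfl fun k hk => ?_
    obtain ⟨hkq, hkp, -⟩ := by
      have h1 := Finset.mem_erase.1 hk
      have h2 := Finset.mem_erase.1 h1.2
      exact (⟨h1.1, h2.1, trivial⟩ : _ ∧ _ ∧ True)
    rw [hpvπ k hkp hkq]
  have hres : ∀ (T : Perm (Fin (2 * n))) (vv ww : SkVar n)
      (hTv : pv T p = vv) (hTw : pv T q = ww),
      D T - Finsupp.single ww 1 - Finsupp.single vv 1 =
        ∑ k ∈ (Finset.univ.erase p).erase q, Finsupp.single (pv T k) 1 := by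
    intro T vv ww hTv hTw
    rw [hsplit T, hTv, hTw, add_right_comm, add_tsub_cancel_right, add_tsub_cancel_right]
  refine ⟨hmem, ?_, ?_, ?_, ?_, ?_⟩
  · rw [hD, D_apply_eq_one hbπ hpvp]; omega
  · rw [hD, D_apply_eq_one hbπ hpvq]; omega
  · rw [hres σ _ _ hp hq, hD, hres (π * σ) _ _ hpvp hpvq, hrest]
  · rw [sign_normP, map_mul]
  · have he : π⁻¹ * normP (π * σ) =
        σ * blockPerm (Tuple.sort fun k => (π * σ) (pos0 k)) := by
      rw [normP, mul_assoc, ← mul_assoc π⁻¹, inv_mul_cancel, one_mul]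
    rw [he]
    exact normP_norm hσ _


/-! ### Transport lemma -/

lemma transport (K : Type) [Field K] (π : Perm (Fin (2 * n)))
    (a b c d a' b' c' d' : Fin (2 * n))
    (hab : a < b) (hcd : c < d) (hac : a ≠ c) (had : a ≠ d) (hbc : b ≠ c) (hbd : b ≠ d)
    (ha'b' : a' < b') (hc'd' : c' < d')
    (hπa : π a = a') (hπb : π b = b') (hπc : π c = c') (hπd : π d = d')
    (hfix : ∀ x, x ≠ a → x ≠ b → x ≠ c → x ≠ d → π x = x) :
    pderiv (⟨(a, b), hab⟩ : SkVar n) (pderiv ⟨(c, d), hcd⟩ (genPf n K)) =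
      (Equiv.Perm.sign π : ℤ) •
        pderiv (⟨(a', b'), ha'b'⟩ : SkVar n) (pderiv ⟨(c', d'), hc'd'⟩ (genPf n K)) := by
  classical
  subst hπa hπb hπc hπd
  -- π⁻¹ fixes everything outside the image quadruple
  have hfix' : ∀ x, x ≠ π a → x ≠ π b → x ≠ π c → x ≠ π d → π⁻¹ x = x := by
    intro x h1 h2 h3 h4
    have hy : π (π⁻¹ x) = x := π.apply_symm_apply x
    by_cases e1 : π⁻¹ x = a
    · exact absurd (by rw [← hy, e1]) h1
    by_cases e2 : π⁻¹ x = b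
    · exact absurd (by rw [← hy, e2]) h2
    by_cases e3 : π⁻¹ x = c
    · exact absurd (by rw [← hy, e3]) h3
    by_cases e4 : π⁻¹ x = d
    · exact absurd (by rw [← hy, e4]) h4
    exact (hfix _ e1 e2 e3 e4).symm.trans hy
  have hac' : π a ≠ π c := fun e => hac (π.injective e)
  have had' : π a ≠ π d := fun e => had (π.injective e)
  have hbc' : π b ≠ π c := fun e => hbc (π.injective e)
  have hbd' : π b ≠ π d := fun e => hbd (π.injective e)
  set v : SkVar n := ⟨(a, b), hab⟩ with hvdef
  set w : SkVar n := ⟨(c, d), hcd⟩ with hwdef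
  set v' : SkVar n := ⟨(π a, π b), ha'b'⟩ with hv'def
  set w' : SkVar n := ⟨(π c, π d), hc'd'⟩ with hw'def
  have hvw : v ≠ w := fun e => hac (congrArg (fun t => t.1.1) e)
  have hv'w' : v' ≠ w' := fun e => hac' (congrArg (fun t => t.1.1) e)
  rw [pderiv_pderiv_genPf K v w hvw, pderiv_pderiv_genPf K v' w' hv'w']
  have hLcond : ∀ σ ∈ pfPerms n, (Equiv.Perm.sign σ : ℤ) •
      monomial (D σ - Finsupp.single w 1 - Finsupp.single v 1) ((D σ w * D σ v : ℕ) : K) ≠ 0 →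
      D σ v ≠ 0 ∧ D σ w ≠ 0 := by
    intro σ _ hne
    constructor
    · intro h0; apply hne; rw [h0]; simp
    · intro h0; apply hne; rw [h0]; simp
  have hL : ∑ σ ∈ pfPerms n, (Equiv.Perm.sign σ : ℤ) •
        monomial (D σ - Finsupp.single w 1 - Finsupp.single v 1) ((D σ w * D σ v : ℕ) : K) =
      ∑ σ ∈ (pfPerms n).filter (fun σ => D σ v ≠ 0 ∧ D σ w ≠ 0),
        (Equiv.Perm.sign σ : ℤ) •
          monomial (D σ - Finsupp.single w 1 - Finsupp.single v 1) (1 : K) := by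
    rw [← Finset.sum_filter_of_ne hLcond]
    refine Finset.sum_congr rfl fun σ hσ => ?_
    obtain ⟨hσ', h1, h2⟩ := Finset.mem_filter.1 hσ
    have hb := (mem_pfPerms.1 hσ').1
    have e1 : D σ v = 1 := le_antisymm (D_le_one hb v) (Nat.one_le_iff_ne_zero.2 h1)
    have e2 : D σ w = 1 := le_antisymm (D_le_one hb w) (Nat.one_le_iff_ne_zero.2 h2)
    rw [e1, e2]
    norm_num
  have hRcond : ∀ σ ∈ pfPerms n, (Equiv.Perm.sign σ : ℤ) •
      monomial (D σ - Finsupp.single w' 1 - Finsupp.single v' 1) ((D σ w' * D σ v' : ℕ) : K) ≠ 0 →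
      D σ v' ≠ 0 ∧ D σ w' ≠ 0 := by
    intro σ _ hne
    constructor
    · intro h0; apply hne; rw [h0]; simp
    · intro h0; apply hne; rw [h0]; simp
  have hR : ∑ σ ∈ pfPerms n, (Equiv.Perm.sign σ : ℤ) •
        monomial (D σ - Finsupp.single w' 1 - Finsupp.single v' 1) ((D σ w' * D σ v' : ℕ) : K) =
      ∑ σ ∈ (pfPerms n).filter (fun σ => D σ v' ≠ 0 ∧ D σ w' ≠ 0),
        (Equiv.Perm.sign σ : ℤ) •
          monomial (D σ - Finsupp.single w' 1 - Finsupp.single v' 1) (1 : K) := by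
    rw [← Finset.sum_filter_of_ne hRcond]
    refine Finset.sum_congr rfl fun σ hσ => ?_
    obtain ⟨hσ', h1, h2⟩ := Finset.mem_filter.1 hσ
    have hb := (mem_pfPerms.1 hσ').1
    have e1 : D σ v' = 1 := le_antisymm (D_le_one hb v') (Nat.one_le_iff_ne_zero.2 h1)
    have e2 : D σ w' = 1 := le_antisymm (D_le_one hb w') (Nat.one_le_iff_ne_zero.2 h2)
    rw [e1, e2]
    norm_num
  rw [hL, hR, Finset.smul_sum]
  refine Finset.sum_nbij' (fun σ => normP (π * σ)) (fun σ' => normP (π⁻¹ * σ'))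
    ?_ ?_ ?_ ?_ ?_
  · intro σ hσ
    obtain ⟨hσ', h1, h2⟩ := Finset.mem_filter.1 hσ
    obtain ⟨m1, m2, m3, -, -, -⟩ :=
      step a b c d hab hcd hac had hbc hbd π ha'b' hc'd' hfix hσ' h1 h2
    exact Finset.mem_filter.2 ⟨m1, m2, m3⟩
  · intro σ' hσ'
    obtain ⟨hσ'', h1, h2⟩ := Finset.mem_filter.1 hσ'
    obtain ⟨m1, m2, m3, -, -, -⟩ :=
      step (π a) (π b) (π c) (π d) ha'b' hc'd' hac' had' hbc' hbd' π⁻¹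
        (by rw [Perm.coe_inv, Equiv.symm_apply_apply, Equiv.symm_apply_apply]; exact hab)
        (by rw [Perm.coe_inv, Equiv.symm_apply_apply, Equiv.symm_apply_apply]; exact hcd)
        hfix' hσ'' h1 h2
    simp only [Perm.coe_inv, Equiv.symm_apply_apply] at m2 m3
    exact Finset.mem_filter.2 ⟨m1, m2, m3⟩
  · intro σ hσ
    obtain ⟨hσ', h1, h2⟩ := Finset.mem_filter.1 hσ
    obtain ⟨-, -, -, -, -, m6⟩ :=
      step a b c d hab hcd hac had hbc hbd π ha'b' hc'd' hfix hσ' h1 h2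
    exact m6
  · intro σ' hσ'
    obtain ⟨hσ'', h1, h2⟩ := Finset.mem_filter.1 hσ'
    obtain ⟨-, -, -, -, -, m6⟩ :=
      step (π a) (π b) (π c) (π d) ha'b' hc'd' hac' had' hbc' hbd' π⁻¹
        (by rw [Perm.coe_inv, Equiv.symm_apply_apply, Equiv.symm_apply_apply]; exact hab)
        (by rw [Perm.coe_inv, Equiv.symm_apply_apply, Equiv.symm_apply_apply]; exact hcd)
        hfix' hσ'' h1 h2
    rw [inv_inv] at m6
    exact m6
  · intro σ hσ
    obtain ⟨hσ', h1, h2⟩ := Finset.mem_filter.1 hσ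
    obtain ⟨-, -, -, m4, m5, -⟩ :=
      step a b c d hab hcd hac had hbc hbd π ha'b' hc'd' hfix hσ' h1 h2
    rw [← m4, smul_smul, m5]
    congr 1
    push_cast
    rw [← mul_assoc]
    norm_num [← Units.val_mul, ← mul_assoc, Int.units_mul_self]
end PfAux

/-- for indices `i₁ < i₂ < i₃ < i₄`, each of the three binomial
operators `y_{i₁i₂}y_{i₃i₄} + y_{i₁i₃}y_{i₂i₄}`,
`y_{i₁i₂}y_{i₃i₄} − y_{i₁i₄}y_{i₂i₃}` and `y_{i₁i₃}y_{i₂i₄} + y_{i₁i₄}y_{i₂i₃}`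
annihilates the Pfaffian of the generic skew-symmetric matrix. -/
theorem binomials_annihilate_pfaffian (K : Type) [Field K] (n : ℕ)
    (i₁ i₂ i₃ i₄ : Fin (2 * n)) (h12 : i₁ < i₂) (h23 : i₂ < i₃) (h34 : i₃ < i₄) :
    (pderiv (⟨(i₁, i₂), h12⟩ : SkVar n) (pderiv ⟨(i₃, i₄), h34⟩ (genPf n K)) +
        pderiv (⟨(i₁, i₃), h12.trans h23⟩ : SkVar n)
          (pderiv ⟨(i₂, i₄), h23.trans h34⟩ (genPf n K)) = 0) ∧
      (pderiv (⟨(i₁, i₂), h12⟩ : SkVar n) (pderiv ⟨(i₃, i₄), h34⟩ (genPf n K)) -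
        pderiv (⟨(i₁, i₄), (h12.trans h23).trans h34⟩ : SkVar n)
          (pderiv ⟨(i₂, i₃), h23⟩ (genPf n K)) = 0) ∧
      (pderiv (⟨(i₁, i₃), h12.trans h23⟩ : SkVar n)
          (pderiv ⟨(i₂, i₄), h23.trans h34⟩ (genPf n K)) +
        pderiv (⟨(i₁, i₄), (h12.trans h23).trans h34⟩ : SkVar n)
          (pderiv ⟨(i₂, i₃), h23⟩ (genPf n K)) = 0) := by
  have h13 := h12.trans h23
  have h24 := h23.trans h34
  have h14 := h13.trans h34
  refine ⟨?_, ?_, ?_⟩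
  · have T := PfAux.transport K (Equiv.swap i₂ i₃) i₁ i₂ i₃ i₄ i₁ i₃ i₂ i₄
      h12 h34 h13.ne h14.ne h23.ne h24.ne h13 h24
      (Equiv.swap_apply_of_ne_of_ne h12.ne h13.ne)
      (Equiv.swap_apply_left _ _)
      (Equiv.swap_apply_right _ _)
      (Equiv.swap_apply_of_ne_of_ne h24.ne' h34.ne')
      (fun x _ hx2 hx3 _ => Equiv.swap_apply_of_ne_of_ne hx2 hx3)
    rw [Equiv.Perm.sign_swap h23.ne] at T
    rw [T]
    simp
  · have hπ2 : ∀ x, (Equiv.swap i₂ i₃ * Equiv.swap i₂ i₄) x =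
        Equiv.swap i₂ i₃ (Equiv.swap i₂ i₄ x) := fun x => Equiv.Perm.mul_apply _ _ x
    have T := PfAux.transport K (Equiv.swap i₂ i₃ * Equiv.swap i₂ i₄) i₁ i₂ i₃ i₄ i₁ i₄ i₂ i₃
      h12 h34 h13.ne h14.ne h23.ne h24.ne h14 h23
      (by rw [hπ2, Equiv.swap_apply_of_ne_of_ne h12.ne h14.ne,
        Equiv.swap_apply_of_ne_of_ne h12.ne h13.ne])
      (by rw [hπ2, Equiv.swap_apply_left, Equiv.swap_apply_of_ne_of_ne h24.ne' h34.ne'])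
      (by rw [hπ2, Equiv.swap_apply_of_ne_of_ne h23.ne' h34.ne, Equiv.swap_apply_right])
      (by rw [hπ2, Equiv.swap_apply_right, Equiv.swap_apply_left])
      (fun x hx1 hx2 hx3 hx4 => by
        rw [hπ2, Equiv.swap_apply_of_ne_of_ne hx2 hx4,
          Equiv.swap_apply_of_ne_of_ne hx2 hx3])
    rw [map_mul, Equiv.Perm.sign_swap h23.ne, Equiv.Perm.sign_swap h24.ne] at T
    rw [T]
    simp
  · have T := PfAux.transport K (Equiv.swap i₃ i₄) i₁ i₃ i₂ i₄ i₁ i₄ i₂ i₃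
      h13 h24 h12.ne h14.ne h23.ne' h34.ne h14 h23
      (Equiv.swap_apply_of_ne_of_ne h13.ne h14.ne)
      (Equiv.swap_apply_left _ _)
      (Equiv.swap_apply_of_ne_of_ne h23.ne h24.ne)
      (Equiv.swap_apply_right _ _)
      (fun x _ hx3 _ hx4 => Equiv.swap_apply_of_ne_of_ne hx3 hx4)
    rw [Equiv.Perm.sign_swap h34.ne] at T
    rw [T]
    simp
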